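/- arXiv:1209.2185 — 4 statements merged into one kernel-verified Lean document; each statement's English description precedes it below -/
import Mathlib

section
/- If the column space of A is contained in the column space of B (both matrices having m rows), then the coherence of A is at most the coherence of B: μ(A) ≤ μ(B). -/
open Matrix

/-- coherence given a matrix `U` whose columns are an orthonormal basis of the column space -/
noncomputable def coh {m p : ℕ} (U : Matrix (Fin m) (Fin p) ℝ) : ℝ :=
  ⨆ i : Fin m, ∑ j, U i j ^ 2

theorem stmt1 {m n ℓ p q : ℕ} (A : Matrix (Fin m) (Fin n) ℝ) (B : Matrix (Fin m) (Fin ℓ) ℝ)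
    (UA : Matrix (Fin m) (Fin p) ℝ) (UB : Matrix (Fin m) (Fin q) ℝ)
    (hUA : UAᵀ * UA = 1) (hUB : UBᵀ * UB = 1)
    (hrA : LinearMap.range UA.mulVecLin = LinearMap.range A.mulVecLin)
    (hrB : LinearMap.range UB.mulVecLin = LinearMap.range B.mulVecLin)
    (hAB : LinearMap.range A.mulVecLin ≤ LinearMap.range B.mulVecLin) :
    coh UA ≤ coh UB := by
  have hAB' : LinearMap.range UA.mulVecLin ≤ LinearMap.range UB.mulVecLin := by
    rw [hrA, hrB]; exact hAB
  set C := UBᵀ * UA with hCdef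
  have hmv : ∀ x, (UB * C).mulVec x = UA.mulVec x := by
    intro x
    obtain ⟨y, hy⟩ := hAB' ⟨x, rfl⟩
    have hy' : UB.mulVec y = UA.mulVec x := hy
    have hCx : C.mulVec x = y := by
      have h2 := congrArg (UBᵀ.mulVec) hy'
      rw [mulVec_mulVec, hUB, one_mulVec] at h2
      rw [hCdef, ← mulVec_mulVec, ← h2]
    rw [← mulVec_mulVec, hCx, hy']
  have hC : UB * C = UA := by
    ext i j
    have := congrFun (hmv (Pi.single j 1)) i
    simpa using this
  have hCC : Cᵀ * C = 1 := by
    have : Cᵀ * C = UAᵀ * (UB * C) := by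
      rw [hCdef, transpose_mul, transpose_transpose, Matrix.mul_assoc]
    rw [this, hC, hUA]
  clear_value C
  clear hCdef hmv
  -- key pointwise inequality
  have hsq : ∀ (r : ℕ) (M : Matrix (Fin m) (Fin r) ℝ) (i : Fin m),
      (M * Mᵀ) i i = ∑ j, M i j ^ 2 := by
    intro r M i
    simp [Matrix.mul_apply, sq]
  set D := UB * (1 - C * Cᵀ) with hDdef
  have h1 : (1 - C * Cᵀ) * (1 - C * Cᵀ) = 1 - C * Cᵀ := by
    have : C * Cᵀ * (C * Cᵀ) = C * (Cᵀ * C) * Cᵀ := by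
      simp [Matrix.mul_assoc]
    rw [sub_mul, mul_sub, mul_sub, one_mul, mul_one, this, hCC, Matrix.mul_one]
    simp
  have hD : D * Dᵀ = UB * UBᵀ - UA * UAᵀ := by
    have htr : (1 - C * Cᵀ)ᵀ = 1 - C * Cᵀ := by
      simp [transpose_sub, transpose_mul, transpose_transpose]
    have e1 : D * Dᵀ = UB * ((1 - C * Cᵀ) * (1 - C * Cᵀ)) * UBᵀ := by
      rw [hDdef, transpose_mul, htr]
      simp [Matrix.mul_assoc]
    rw [e1, h1, Matrix.mul_sub, Matrix.mul_one, Matrix.sub_mul]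
    congr 1
    rw [← hC, transpose_mul]
    simp [Matrix.mul_assoc]
  have key : ∀ i, ∑ j, UA i j ^ 2 ≤ ∑ j, UB i j ^ 2 := by
    intro i
    have h0 : 0 ≤ (D * Dᵀ) i i := by
      rw [hsq]
      exact Finset.sum_nonneg fun j _ => sq_nonneg _
    have := h0
    rw [hD] at this
    have h3 : (UA * UAᵀ) i i ≤ (UB * UBᵀ) i i := by
      have := this
      simp only [Matrix.sub_apply] at this
      linarith
    rw [hsq, hsq] at h3
    exact h3
  exact ciSup_mono (Set.Finite.bddAbove (Set.finite_range _)) key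
end

section
/- Let Ψ ∈ ℝ^{p×q} and Φ = D_L Ψ D_R with D_L ∈ ℝ^{p×p}, D_R ∈ ℝ^{q×q} nonsingular. Let γ = max(‖D_L D_L^T − I_p‖₂, ‖D_R^T D_R − I_q‖₂). Then for all i = 1,…,rank(Ψ): |σ_i(Φ) − σ_i(Ψ)| ≤ γ · σ_i(Ψ). -/
open Matrix

theorem Matrix.isHermitian_transpose_mul_self {m n α : Type*} [Fintype m] [CommSemiring α]
    [StarRing α] [TrivialStar α] (A : Matrix m n α) : (Aᵀ * A).IsHermitian := by
  have h := Matrix.isHermitian_conjTranspose_mul_self A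
  rwa [Matrix.conjTranspose_eq_transpose_of_trivial] at h

noncomputable def svals {p q : ℕ} (X : Matrix (Fin p) (Fin q) ℝ) : Fin q → ℝ :=
  fun i => Real.sqrt ((Matrix.isHermitian_transpose_mul_self X).eigenvalues
    (Tuple.sort ((Matrix.isHermitian_transpose_mul_self X).eigenvalues) i.rev))

noncomputable def sNorm {p q : ℕ} (X : Matrix (Fin p) (Fin q) ℝ) : ℝ :=
  ⨆ i, svals X i

section Aux

variable {n p q : ℕ}

/-! ### dot product basics -/

lemma dpAux_mulVec_left {m k : ℕ} (A : Matrix (Fin m) (Fin k) ℝ) (a : Fin k → ℝ)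
    (b : Fin m → ℝ) : (A *ᵥ a) ⬝ᵥ b = a ⬝ᵥ (Aᵀ *ᵥ b) := by
  rw [dotProduct_comm, Matrix.dotProduct_mulVec, Matrix.mulVec_transpose, dotProduct_comm]

lemma dpAux_cs (x y : Fin n → ℝ) : (x ⬝ᵥ y)^2 ≤ (x ⬝ᵥ x) * (y ⬝ᵥ y) := by
  simpa [dotProduct, pow_two] using Finset.sum_mul_sq_le_sq_mul_sq Finset.univ x y

lemma dpAux_self_nonneg (x : Fin n → ℝ) : 0 ≤ x ⬝ᵥ x :=
  Finset.sum_nonneg fun i _ => mul_self_nonneg _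

lemma dpAux_self_pos {x : Fin n → ℝ} (hx : x ≠ 0) : 0 < x ⬝ᵥ x := by
  have h1 : x ⬝ᵥ x ≠ 0 := fun h0 => hx (dotProduct_self_eq_zero.mp h0)
  exact lt_of_le_of_ne (dpAux_self_nonneg x) (Ne.symm h1)

lemma qfAux_tms {X : Matrix (Fin p) (Fin q) ℝ} (x : Fin q → ℝ) :
    x ⬝ᵥ ((Xᵀ * X) *ᵥ x) = (X *ᵥ x) ⬝ᵥ (X *ᵥ x) := by
  rw [← Matrix.mulVec_mulVec, ← dpAux_mulVec_left]

/-! ### spectral expansion -/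

lemma starAux_coe (U : Matrix (Fin n) (Fin n) ℝ) : star U = Uᵀ := by
  rw [Matrix.star_eq_conjTranspose, Matrix.conjTranspose_eq_transpose_of_trivial]

lemma mulstarAux {M : Matrix (Fin n) (Fin n) ℝ} (hM : M.IsHermitian) :
    (hM.eigenvectorUnitary : Matrix (Fin n) (Fin n) ℝ) *
      star (hM.eigenvectorUnitary : Matrix (Fin n) (Fin n) ℝ) = 1 :=
  Matrix.mem_unitaryGroup_iff.mp hM.eigenvectorUnitary.2

lemma starmulAux {M : Matrix (Fin n) (Fin n) ℝ} (hM : M.IsHermitian) :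
    star (hM.eigenvectorUnitary : Matrix (Fin n) (Fin n) ℝ) *
      (hM.eigenvectorUnitary : Matrix (Fin n) (Fin n) ℝ) = 1 :=
  Matrix.mem_unitaryGroup_iff'.mp hM.eigenvectorUnitary.2

lemma expandAux_norm {M : Matrix (Fin n) (Fin n) ℝ} (hM : M.IsHermitian) (x : Fin n → ℝ) :
    x ⬝ᵥ x = ∑ j, ((star (hM.eigenvectorUnitary : Matrix (Fin n) (Fin n) ℝ) *ᵥ x) j)^2 := by
  set U := (hM.eigenvectorUnitary : Matrix (Fin n) (Fin n) ℝ) with hU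
  set c := star U *ᵥ x with hc
  have hx : U *ᵥ c = x := by
    rw [hc, Matrix.mulVec_mulVec, mulstarAux hM, Matrix.one_mulVec]
  calc x ⬝ᵥ x = (U *ᵥ c) ⬝ᵥ (U *ᵥ c) := by rw [hx]
    _ = c ⬝ᵥ ((Uᵀ * U) *ᵥ c) := by rw [dpAux_mulVec_left, Matrix.mulVec_mulVec]
    _ = ∑ j, (c j)^2 := by
        rw [← starAux_coe, starmulAux hM, Matrix.one_mulVec]
        simp [dotProduct, pow_two]

lemma expandAux_qf {M : Matrix (Fin n) (Fin n) ℝ} (hM : M.IsHermitian) (x : Fin n → ℝ) :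
    x ⬝ᵥ (M *ᵥ x) = ∑ j, hM.eigenvalues j *
      ((star (hM.eigenvectorUnitary : Matrix (Fin n) (Fin n) ℝ) *ᵥ x) j)^2 := by
  set U := (hM.eigenvectorUnitary : Matrix (Fin n) (Fin n) ℝ) with hU
  set c := star U *ᵥ x with hc
  have hx : U *ᵥ c = x := by
    rw [hc, Matrix.mulVec_mulVec, mulstarAux hM, Matrix.one_mulVec]
  calc x ⬝ᵥ (M *ᵥ x) = (U *ᵥ c) ⬝ᵥ (M *ᵥ (U *ᵥ c)) := by rw [hx]
    _ = c ⬝ᵥ ((Uᵀ * M * U) *ᵥ c) := by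
        rw [dpAux_mulVec_left, Matrix.mulVec_mulVec, Matrix.mulVec_mulVec, Matrix.mul_assoc]
    _ = c ⬝ᵥ (Matrix.diagonal (RCLike.ofReal ∘ hM.eigenvalues) *ᵥ c) := by
        have hd := hM.conjStarAlgAut_star_eigenvectorUnitary
        rw [Unitary.conjStarAlgAut_star_apply] at hd
        rw [← starAux_coe, hd]
    _ = ∑ j, hM.eigenvalues j * (c j)^2 := by
        simp only [dotProduct, Matrix.mulVec_diagonal, Function.comp_apply,
          RCLike.ofReal_real_eq_id, id_eq, pow_two]
        exact Finset.sum_congr rfl fun j _ => by ring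

lemma eigAux_nonneg {N : Matrix (Fin n) (Fin n) ℝ} (hN : N.IsHermitian)
    (hNpos : ∀ x : Fin n → ℝ, 0 ≤ x ⬝ᵥ (N *ᵥ x)) (j : Fin n) : 0 ≤ hN.eigenvalues j := by
  rw [hN.eigenvalues_eq]
  simpa using hNpos (hN.eigenvectorBasis j)

/-! ### coordinate and eigen subspaces -/

noncomputable def CsubAux (S : Finset (Fin n)) : Submodule ℝ (Fin n → ℝ) :=
  Submodule.span ℝ ((fun j => Pi.single j (1:ℝ)) '' S)

lemma CsubAux_finrank (S : Finset (Fin n)) : Module.finrank ℝ (CsubAux S) = S.card := by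
  classical
  have hli : LinearIndependent ℝ (fun j : S => (Pi.single (j:Fin n) (1:ℝ) : Fin n → ℝ)) := by
    have h2 := (Pi.basisFun ℝ (Fin n)).linearIndependent.comp
      (fun j : S => (j : Fin n)) Subtype.val_injective
    have he : (⇑(Pi.basisFun ℝ (Fin n)) ∘ fun j : S => (j:Fin n)) =
        fun j : S => (Pi.single (j:Fin n) (1:ℝ) : Fin n → ℝ) := by
      funext j; simp
    rwa [he] at h2
  have he : CsubAux S = Submodule.span ℝ
      (Set.range fun j : S => (Pi.single (j:Fin n) (1:ℝ) : Fin n → ℝ)) := by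
    unfold CsubAux
    congr 1
    ext x
    constructor
    · rintro ⟨k, hk, rfl⟩; exact ⟨⟨k, hk⟩, rfl⟩
    · rintro ⟨⟨k, hk⟩, rfl⟩; exact ⟨k, hk, rfl⟩
  rw [he, finrank_span_eq_card hli, Fintype.card_coe]

lemma CsubAux_apply_eq_zero {S : Finset (Fin n)} {x : Fin n → ℝ} (hx : x ∈ CsubAux S)
    {j : Fin n} (hj : j ∉ S) : x j = 0 := by
  induction hx using Submodule.span_induction with
  | mem y hy =>
      obtain ⟨k, hk, rfl⟩ := hy
      have : k ≠ j := fun h => hj (h ▸ hk)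
      simp [Pi.single_apply, this]
  | zero => simp
  | add y z _ _ hy hz => simp [hy, hz]
  | smul a y _ hy => simp [hy]

noncomputable def mulVecEquivAux (A : Matrix (Fin n) (Fin n) ℝ) (hA : IsUnit A.det) :
    (Fin n → ℝ) ≃ₗ[ℝ] (Fin n → ℝ) :=
  LinearEquiv.ofLinear (Matrix.mulVecLin A) (Matrix.mulVecLin A⁻¹)
    (LinearMap.ext fun x => by
      simp [Matrix.mulVec_mulVec, Matrix.mul_nonsing_inv A hA])
    (LinearMap.ext fun x => by
      simp [Matrix.mulVec_mulVec, Matrix.nonsing_inv_mul A hA])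

noncomputable def WsubAux {M : Matrix (Fin n) (Fin n) ℝ} (hM : M.IsHermitian)
    (S : Finset (Fin n)) : Submodule ℝ (Fin n → ℝ) :=
  Submodule.map (Matrix.mulVecLin (hM.eigenvectorUnitary : Matrix (Fin n) (Fin n) ℝ)) (CsubAux S)

lemma unitaryAux_mulVec_inj {M : Matrix (Fin n) (Fin n) ℝ} (hM : M.IsHermitian) :
    Function.Injective
      (Matrix.mulVecLin (hM.eigenvectorUnitary : Matrix (Fin n) (Fin n) ℝ)) := by
  intro x y h
  have h2 := congrArg (fun v => star (hM.eigenvectorUnitary : Matrix (Fin n) (Fin n) ℝ) *ᵥ v) h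
  simpa [Matrix.mulVecLin_apply, Matrix.mulVec_mulVec, starmulAux hM] using h2

lemma WsubAux_finrank {M : Matrix (Fin n) (Fin n) ℝ} (hM : M.IsHermitian) (S : Finset (Fin n)) :
    Module.finrank ℝ (WsubAux hM S) = S.card := by
  rw [← CsubAux_finrank S]
  exact (LinearEquiv.finrank_eq
    (Submodule.equivMapOfInjective _ (unitaryAux_mulVec_inj hM) (CsubAux S))).symm

lemma WsubAux_coord {M : Matrix (Fin n) (Fin n) ℝ} (hM : M.IsHermitian) {S : Finset (Fin n)}
    {x : Fin n → ℝ} (hx : x ∈ WsubAux hM S) {j : Fin n} (hj : j ∉ S) :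
    (star (hM.eigenvectorUnitary : Matrix (Fin n) (Fin n) ℝ) *ᵥ x) j = 0 := by
  obtain ⟨y, hy, rfl⟩ := hx
  have : star (hM.eigenvectorUnitary : Matrix (Fin n) (Fin n) ℝ) *ᵥ
      (Matrix.mulVecLin (hM.eigenvectorUnitary : Matrix (Fin n) (Fin n) ℝ) y) = y := by
    simp [Matrix.mulVecLin_apply, Matrix.mulVec_mulVec, starmulAux hM]
  rw [this]
  exact CsubAux_apply_eq_zero hy hj

lemma qfAux_ge_on_Wsub {M : Matrix (Fin n) (Fin n) ℝ} (hM : M.IsHermitian) {S : Finset (Fin n)}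
    {v : ℝ} (hv : ∀ j ∈ S, v ≤ hM.eigenvalues j) {x : Fin n → ℝ} (hx : x ∈ WsubAux hM S) :
    v * (x ⬝ᵥ x) ≤ x ⬝ᵥ (M *ᵥ x) := by
  rw [expandAux_norm hM x, expandAux_qf hM x, Finset.mul_sum]
  apply Finset.sum_le_sum
  intro j _
  by_cases hj : j ∈ S
  · exact mul_le_mul_of_nonneg_right (hv j hj) (sq_nonneg _)
  · rw [WsubAux_coord hM hx hj]; simp

lemma qfAux_le_on_Wsub {M : Matrix (Fin n) (Fin n) ℝ} (hM : M.IsHermitian) {S : Finset (Fin n)}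
    {v : ℝ} (hv : ∀ j ∈ S, hM.eigenvalues j ≤ v) {x : Fin n → ℝ} (hx : x ∈ WsubAux hM S) :
    x ⬝ᵥ (M *ᵥ x) ≤ v * (x ⬝ᵥ x) := by
  rw [expandAux_norm hM x, expandAux_qf hM x, Finset.mul_sum]
  apply Finset.sum_le_sum
  intro j _
  by_cases hj : j ∈ S
  · exact mul_le_mul_of_nonneg_right (hv j hj) (sq_nonneg _)
  · rw [WsubAux_coord hM hx hj]; simp

lemma existsAux_ne_zero_mem_inf (W1 W2 : Submodule ℝ (Fin n → ℝ))
    (h : n < Module.finrank ℝ W1 + Module.finrank ℝ W2) :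
    ∃ x : Fin n → ℝ, x ∈ W1 ∧ x ∈ W2 ∧ x ≠ 0 := by
  have hsum := Submodule.finrank_sup_add_finrank_inf_eq W1 W2
  have hle : Module.finrank ℝ ↥(W1 ⊔ W2) ≤ n := by
    have := Submodule.finrank_le (W1 ⊔ W2)
    simpa using this
  have hpos : 0 < Module.finrank ℝ ↥(W1 ⊓ W2) := by omega
  obtain ⟨x, hx⟩ := Module.finrank_pos_iff_exists_ne_zero.mp hpos
  exact ⟨(x : Fin n → ℝ), x.2.1, x.2.2, fun h0 => hx (Subtype.ext h0)⟩

/-! ### the key eigenvalue comparison lemma -/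

lemma genAux_compare {M N S : Matrix (Fin n) (Fin n) ℝ} (hM : M.IsHermitian)
    (hN : N.IsHermitian) (hS : IsUnit S.det) {c κ : ℝ} (hc : 0 ≤ c)
    (hSb : ∀ x : Fin n → ℝ, (S *ᵥ x) ⬝ᵥ (S *ᵥ x) ≤ κ * (x ⬝ᵥ x))
    (hNpos : ∀ x : Fin n → ℝ, 0 ≤ x ⬝ᵥ (N *ᵥ x))
    (h : ∀ x : Fin n → ℝ, x ⬝ᵥ (M *ᵥ x) ≤ c * ((S *ᵥ x) ⬝ᵥ (N *ᵥ (S *ᵥ x))))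
    (t : Fin n) :
    hM.eigenvalues (Tuple.sort hM.eigenvalues t) ≤
      c * κ * hN.eigenvalues (Tuple.sort hN.eigenvalues t) := by
  classical
  set σM := Tuple.sort hM.eigenvalues with hσM
  set σN := Tuple.sort hN.eigenvalues with hσN
  set vM := hM.eigenvalues (σM t) with hvM
  set vN := hN.eigenvalues (σN t) with hvN
  have hvN0 : 0 ≤ vN := eigAux_nonneg hN hNpos _
  set S1 : Finset (Fin n) := (Finset.Ici t).image σM with hS1
  set S2 : Finset (Fin n) := (Finset.Iic t).image σN with hS2
  have hcard1 : S1.card = n - t := by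
    rw [hS1, Finset.card_image_of_injective _ σM.injective, Fin.card_Ici]
  have hcard2 : S2.card = t + 1 := by
    rw [hS2, Finset.card_image_of_injective _ σN.injective, Fin.card_Iic]
  set W1 := WsubAux hM S1 with hW1
  set W2 := Submodule.comap
    ((mulVecEquivAux S hS : (Fin n → ℝ) →ₗ[ℝ] (Fin n → ℝ))) (WsubAux hN S2) with hW2
  have hfr1 : Module.finrank ℝ W1 = n - t := by rw [hW1, WsubAux_finrank, hcard1]
  have hfr2 : Module.finrank ℝ W2 = t + 1 := by
    rw [hW2, Submodule.comap_equiv_eq_map_symm,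
      LinearEquiv.finrank_map_eq (mulVecEquivAux S hS).symm, WsubAux_finrank, hcard2]
  obtain ⟨x, hx1, hx2, hx0⟩ := existsAux_ne_zero_mem_inf W1 W2 (by
    rw [hfr1, hfr2]
    have := t.isLt
    omega)
  have hxx : 0 < x ⬝ᵥ x := dpAux_self_pos hx0
  have hlow : vM * (x ⬝ᵥ x) ≤ x ⬝ᵥ (M *ᵥ x) := by
    apply qfAux_ge_on_Wsub hM _ hx1
    intro j hj
    rw [hS1] at hj
    obtain ⟨j', hj', rfl⟩ := Finset.mem_image.mp hj
    exact Tuple.monotone_sort hM.eigenvalues (Finset.mem_Ici.mp hj')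
  have hSxmem : S *ᵥ x ∈ WsubAux hN S2 := hx2
  have hhigh : (S *ᵥ x) ⬝ᵥ (N *ᵥ (S *ᵥ x)) ≤ vN * ((S *ᵥ x) ⬝ᵥ (S *ᵥ x)) := by
    apply qfAux_le_on_Wsub hN _ hSxmem
    intro j hj
    rw [hS2] at hj
    obtain ⟨j', hj', rfl⟩ := Finset.mem_image.mp hj
    exact Tuple.monotone_sort hN.eigenvalues (Finset.mem_Iic.mp hj')
  have chain : vM * (x ⬝ᵥ x) ≤ c * κ * vN * (x ⬝ᵥ x) := by
    calc vM * (x ⬝ᵥ x) ≤ x ⬝ᵥ (M *ᵥ x) := hlow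
      _ ≤ c * ((S *ᵥ x) ⬝ᵥ (N *ᵥ (S *ᵥ x))) := h x
      _ ≤ c * (vN * ((S *ᵥ x) ⬝ᵥ (S *ᵥ x))) := mul_le_mul_of_nonneg_left hhigh hc
      _ ≤ c * (vN * (κ * (x ⬝ᵥ x))) := by
          apply mul_le_mul_of_nonneg_left _ hc
          exact mul_le_mul_of_nonneg_left (hSb x) hvN0
      _ = c * κ * vN * (x ⬝ᵥ x) := by ring
  have := le_of_mul_le_mul_right
    (by linarith [chain] : vM * (x ⬝ᵥ x) ≤ (c * κ * vN) * (x ⬝ᵥ x)) hxx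
  linarith [this]

/-! ### spectral norm bounds -/

lemma tmsAux_nonneg (X : Matrix (Fin p) (Fin q) ℝ) (x : Fin q → ℝ) :
    0 ≤ x ⬝ᵥ ((Xᵀ * X) *ᵥ x) := by rw [qfAux_tms]; exact dpAux_self_nonneg _

lemma svalsAux_nonneg (X : Matrix (Fin p) (Fin q) ℝ) (i : Fin q) : 0 ≤ svals X i :=
  Real.sqrt_nonneg _

lemma svalsAux_le_sNorm (X : Matrix (Fin p) (Fin q) ℝ) (i : Fin q) : svals X i ≤ sNorm X :=
  le_ciSup (Set.Finite.bddAbove (Set.finite_range _)) i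

lemma sNormAux_nonneg (X : Matrix (Fin p) (Fin q) ℝ) : 0 ≤ sNorm X :=
  Real.iSup_nonneg fun i => svalsAux_nonneg X i

lemma eigAux_le_sNorm_sq (X : Matrix (Fin p) (Fin q) ℝ) (j : Fin q) :
    (Matrix.isHermitian_transpose_mul_self X).eigenvalues j ≤ (sNorm X)^2 := by
  set hX := Matrix.isHermitian_transpose_mul_self X
  set σ := Tuple.sort hX.eigenvalues with hσ
  set i : Fin q := (σ.symm j).rev with hi
  have hij : σ i.rev = j := by rw [hi, Fin.rev_rev, Equiv.apply_symm_apply]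
  have hs : svals X i = Real.sqrt (hX.eigenvalues j) := by
    have h1 : svals X i = Real.sqrt (hX.eigenvalues (σ i.rev)) := rfl
    rw [h1, hij]
  have h0 : 0 ≤ hX.eigenvalues j := eigAux_nonneg hX (tmsAux_nonneg X) j
  calc hX.eigenvalues j = (Real.sqrt (hX.eigenvalues j))^2 := (Real.sq_sqrt h0).symm
    _ ≤ (sNorm X)^2 := by
        apply pow_le_pow_left₀ (Real.sqrt_nonneg _)
        rw [← hs]; exact svalsAux_le_sNorm X i

lemma mulVecAux_sq_le_sNorm (X : Matrix (Fin p) (Fin q) ℝ) (x : Fin q → ℝ) :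
    (X *ᵥ x) ⬝ᵥ (X *ᵥ x) ≤ (sNorm X)^2 * (x ⬝ᵥ x) := by
  rw [← qfAux_tms, expandAux_qf (Matrix.isHermitian_transpose_mul_self X) x,
    expandAux_norm (Matrix.isHermitian_transpose_mul_self X) x, Finset.mul_sum]
  apply Finset.sum_le_sum
  intro j _
  exact mul_le_mul_of_nonneg_right (eigAux_le_sNorm_sq X j) (sq_nonneg _)

lemma absAux_qf_le {E : Matrix (Fin n) (Fin n) ℝ} {g : ℝ} (hg : 0 ≤ g)
    (hop : ∀ x : Fin n → ℝ, (E *ᵥ x) ⬝ᵥ (E *ᵥ x) ≤ g^2 * (x ⬝ᵥ x)) (x : Fin n → ℝ) :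
    |x ⬝ᵥ (E *ᵥ x)| ≤ g * (x ⬝ᵥ x) := by
  have h1 : (x ⬝ᵥ (E *ᵥ x))^2 ≤ (g * (x ⬝ᵥ x))^2 := by
    calc (x ⬝ᵥ (E *ᵥ x))^2 ≤ (x ⬝ᵥ x) * ((E *ᵥ x) ⬝ᵥ (E *ᵥ x)) := dpAux_cs _ _
      _ ≤ (x ⬝ᵥ x) * (g^2 * (x ⬝ᵥ x)) := mul_le_mul_of_nonneg_left (hop x) (dpAux_self_nonneg x)
      _ = (g * (x ⬝ᵥ x))^2 := by ring
  calc |x ⬝ᵥ (E *ᵥ x)| = Real.sqrt ((x ⬝ᵥ (E *ᵥ x))^2) := (Real.sqrt_sq_eq_abs _).symm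
    _ ≤ Real.sqrt ((g * (x ⬝ᵥ x))^2) := Real.sqrt_le_sqrt h1
    _ = g * (x ⬝ᵥ x) := Real.sqrt_sq (mul_nonneg hg (dpAux_self_nonneg x))

lemma transferAux {A : Matrix (Fin n) (Fin n) ℝ} {C : ℝ} (hC : 0 ≤ C)
    (h : ∀ y : Fin n → ℝ, (Aᵀ *ᵥ y) ⬝ᵥ (Aᵀ *ᵥ y) ≤ C * (y ⬝ᵥ y)) (x : Fin n → ℝ) :
    (A *ᵥ x) ⬝ᵥ (A *ᵥ x) ≤ C * (x ⬝ᵥ x) := by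
  set z := A *ᵥ x with hz
  have key : (z ⬝ᵥ z)^2 ≤ (x ⬝ᵥ x) * (C * (z ⬝ᵥ z)) := by
    calc (z ⬝ᵥ z)^2 = (x ⬝ᵥ (Aᵀ *ᵥ z))^2 := by rw [← dpAux_mulVec_left, ← hz]
      _ ≤ (x ⬝ᵥ x) * ((Aᵀ *ᵥ z) ⬝ᵥ (Aᵀ *ᵥ z)) := dpAux_cs _ _
      _ ≤ (x ⬝ᵥ x) * (C * (z ⬝ᵥ z)) := mul_le_mul_of_nonneg_left (h z) (dpAux_self_nonneg x)
  rcases eq_or_lt_of_le (dpAux_self_nonneg z) with h0 | h0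
  · rw [← h0]; exact mul_nonneg hC (dpAux_self_nonneg x)
  · have h2 : z ⬝ᵥ z * (z ⬝ᵥ z) ≤ (C * (x ⬝ᵥ x)) * (z ⬝ᵥ z) := by
      rw [pow_two] at key; nlinarith [key]
    exact le_of_mul_le_mul_right h2 h0

end Aux

theorem stmt6 {p q : ℕ} (Ψ : Matrix (Fin p) (Fin q) ℝ)
    (DL : Matrix (Fin p) (Fin p) ℝ) (DR : Matrix (Fin q) (Fin q) ℝ)
    (hDL : IsUnit DL.det) (hDR : IsUnit DR.det)
    (i : Fin q) (hi : (i : ℕ) < Ψ.rank) :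
    |svals (DL * Ψ * DR) i - svals Ψ i| ≤
      max (sNorm (DL * DLᵀ - 1)) (sNorm (DRᵀ * DR - 1)) * svals Ψ i := by
  classical
  set Φ := DL * Ψ * DR with hΦ
  set γ := max (sNorm (DL * DLᵀ - 1)) (sNorm (DRᵀ * DR - 1)) with hγ
  have hγ0 : 0 ≤ γ := le_trans (sNormAux_nonneg _) (le_max_left _ _)
  -- quadratic form bounds from sNorm
  have hEL : ∀ x : Fin p → ℝ, |x ⬝ᵥ ((DL * DLᵀ - 1) *ᵥ x)| ≤ γ * (x ⬝ᵥ x) := by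
    intro x
    apply absAux_qf_le hγ0 _ x
    intro y
    calc ((DL * DLᵀ - 1) *ᵥ y) ⬝ᵥ ((DL * DLᵀ - 1) *ᵥ y)
        ≤ (sNorm (DL * DLᵀ - 1))^2 * (y ⬝ᵥ y) := mulVecAux_sq_le_sNorm _ y
      _ ≤ γ^2 * (y ⬝ᵥ y) := mul_le_mul_of_nonneg_right
          (pow_le_pow_left₀ (sNormAux_nonneg _) (le_max_left _ _) 2) (dpAux_self_nonneg y)
  have hER : ∀ x : Fin q → ℝ, |x ⬝ᵥ ((DRᵀ * DR - 1) *ᵥ x)| ≤ γ * (x ⬝ᵥ x) := by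
    intro x
    apply absAux_qf_le hγ0 _ x
    intro y
    calc ((DRᵀ * DR - 1) *ᵥ y) ⬝ᵥ ((DRᵀ * DR - 1) *ᵥ y)
        ≤ (sNorm (DRᵀ * DR - 1))^2 * (y ⬝ᵥ y) := mulVecAux_sq_le_sNorm _ y
      _ ≤ γ^2 * (y ⬝ᵥ y) := mul_le_mul_of_nonneg_right
          (pow_le_pow_left₀ (sNormAux_nonneg _) (le_max_right _ _) 2) (dpAux_self_nonneg y)
  -- identities
  have idL : ∀ x : Fin p → ℝ,
      x ⬝ᵥ ((DL * DLᵀ - 1) *ᵥ x) = (DLᵀ *ᵥ x) ⬝ᵥ (DLᵀ *ᵥ x) - x ⬝ᵥ x := by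
    intro x
    rw [Matrix.sub_mulVec, dotProduct_sub, Matrix.one_mulVec, ← Matrix.mulVec_mulVec]
    congr 1
    rw [dotProduct_comm, dpAux_mulVec_left]
  have idR : ∀ x : Fin q → ℝ,
      x ⬝ᵥ ((DRᵀ * DR - 1) *ᵥ x) = (DR *ᵥ x) ⬝ᵥ (DR *ᵥ x) - x ⬝ᵥ x := by
    intro x
    rw [Matrix.sub_mulVec, dotProduct_sub, Matrix.one_mulVec, ← Matrix.mulVec_mulVec,
      ← dpAux_mulVec_left]
  -- operator bounds
  have hLT_up : ∀ y : Fin p → ℝ, (DLᵀ *ᵥ y) ⬝ᵥ (DLᵀ *ᵥ y) ≤ (1 + γ) * (y ⬝ᵥ y) := by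
    intro y
    have := (abs_le.mp (hEL y)).2
    rw [idL y] at this
    linarith
  have hLT_lo : ∀ y : Fin p → ℝ, (1 - γ) * (y ⬝ᵥ y) ≤ (DLᵀ *ᵥ y) ⬝ᵥ (DLᵀ *ᵥ y) := by
    intro y
    have := (abs_le.mp (hEL y)).1
    rw [idL y] at this
    linarith
  have hR_up : ∀ y : Fin q → ℝ, (DR *ᵥ y) ⬝ᵥ (DR *ᵥ y) ≤ (1 + γ) * (y ⬝ᵥ y) := by
    intro y
    have := (abs_le.mp (hER y)).2
    rw [idR y] at this
    linarith
  have hR_lo : ∀ y : Fin q → ℝ, (1 - γ) * (y ⬝ᵥ y) ≤ (DR *ᵥ y) ⬝ᵥ (DR *ᵥ y) := by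
    intro y
    have := (abs_le.mp (hER y)).1
    rw [idR y] at this
    linarith
  have hL_up : ∀ x : Fin p → ℝ, (DL *ᵥ x) ⬝ᵥ (DL *ᵥ x) ≤ (1 + γ) * (x ⬝ᵥ x) :=
    transferAux (by linarith) hLT_up
  -- hermitian proofs
  have hMΦ := Matrix.isHermitian_transpose_mul_self Φ
  have hMΨ := Matrix.isHermitian_transpose_mul_self Ψ
  -- upper eigenvalue comparison
  have upper : ∀ t : Fin q, hMΦ.eigenvalues (Tuple.sort hMΦ.eigenvalues t) ≤
      (1 + γ) * (1 + γ) * hMΨ.eigenvalues (Tuple.sort hMΨ.eigenvalues t) := by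
    intro t
    apply genAux_compare hMΦ hMΨ hDR (by linarith) hR_up (tmsAux_nonneg Ψ) _ t
    intro x
    rw [qfAux_tms, qfAux_tms]
    have hΦx : Φ *ᵥ x = DL *ᵥ (Ψ *ᵥ (DR *ᵥ x)) := by
      rw [hΦ, ← Matrix.mulVec_mulVec, ← Matrix.mulVec_mulVec]
    rw [hΦx]
    exact hL_up (Ψ *ᵥ (DR *ᵥ x))
  -- abbreviations
  set a := hMΨ.eigenvalues (Tuple.sort hMΨ.eigenvalues i.rev) with ha'
  set b := hMΦ.eigenvalues (Tuple.sort hMΦ.eigenvalues i.rev) with hb'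
  have ha : 0 ≤ a := eigAux_nonneg hMΨ (tmsAux_nonneg Ψ) _
  have hb : 0 ≤ b := eigAux_nonneg hMΦ (tmsAux_nonneg Φ) _
  have hub : b ≤ (1 + γ) * (1 + γ) * a := upper i.rev
  have sa : svals Ψ i = Real.sqrt a := rfl
  have sb : svals Φ i = Real.sqrt b := rfl
  have hup : Real.sqrt b ≤ (1 + γ) * Real.sqrt a := by
    have h1 : b ≤ ((1 + γ) * Real.sqrt a)^2 := by
      rw [mul_pow, Real.sq_sqrt ha]
      have : (1 + γ)^2 * a = (1 + γ) * (1 + γ) * a := by ring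
      linarith [hub]
    calc Real.sqrt b ≤ Real.sqrt (((1 + γ) * Real.sqrt a)^2) := Real.sqrt_le_sqrt h1
      _ = (1 + γ) * Real.sqrt a :=
          Real.sqrt_sq (mul_nonneg (by linarith) (Real.sqrt_nonneg _))
  rw [sa, sb, abs_sub_le_iff]
  by_cases hγ1 : γ < 1
  · -- lower eigenvalue comparison
    have h1γ : 0 < 1 - γ := by linarith
    set cc := (1 - γ)⁻¹ with hcc
    have hcc0 : 0 ≤ cc := le_of_lt (inv_pos.mpr h1γ)
    have hRinv : ∀ x : Fin q → ℝ, (DR⁻¹ *ᵥ x) ⬝ᵥ (DR⁻¹ *ᵥ x) ≤ cc * (x ⬝ᵥ x) := by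
      intro x
      have h2 := hR_lo (DR⁻¹ *ᵥ x)
      rw [Matrix.mulVec_mulVec, Matrix.mul_nonsing_inv DR hDR, Matrix.one_mulVec] at h2
      have h3 : (DR⁻¹ *ᵥ x) ⬝ᵥ (DR⁻¹ *ᵥ x) ≤ (x ⬝ᵥ x) / (1 - γ) :=
        (le_div_iff₀ h1γ).mpr (by linarith)
      rw [div_eq_inv_mul] at h3
      exact h3
    have hDLT : IsUnit DLᵀ.det := by rw [Matrix.det_transpose]; exact hDL
    have hLTinv : ∀ y : Fin p → ℝ,
        ((DL⁻¹)ᵀ *ᵥ y) ⬝ᵥ ((DL⁻¹)ᵀ *ᵥ y) ≤ cc * (y ⬝ᵥ y) := by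
      intro y
      rw [Matrix.transpose_nonsing_inv]
      have h2 := hLT_lo ((DLᵀ)⁻¹ *ᵥ y)
      rw [Matrix.mulVec_mulVec, Matrix.mul_nonsing_inv DLᵀ hDLT, Matrix.one_mulVec] at h2
      have h3 : ((DLᵀ)⁻¹ *ᵥ y) ⬝ᵥ ((DLᵀ)⁻¹ *ᵥ y) ≤ (y ⬝ᵥ y) / (1 - γ) :=
        (le_div_iff₀ h1γ).mpr (by linarith)
      rw [div_eq_inv_mul] at h3
      exact h3
    have hLinv : ∀ x : Fin p → ℝ, (DL⁻¹ *ᵥ x) ⬝ᵥ (DL⁻¹ *ᵥ x) ≤ cc * (x ⬝ᵥ x) :=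
      transferAux hcc0 hLTinv
    have hDRinv : IsUnit (DR⁻¹).det := Matrix.isUnit_nonsing_inv_det DR hDR
    have lower : a ≤ cc * cc * b := by
      apply genAux_compare hMΨ hMΦ hDRinv hcc0 hRinv (tmsAux_nonneg Φ) _ i.rev
      intro x
      rw [qfAux_tms, qfAux_tms]
      have hDRx : DR *ᵥ (DR⁻¹ *ᵥ x) = x := by
        rw [Matrix.mulVec_mulVec, Matrix.mul_nonsing_inv DR hDR, Matrix.one_mulVec]
      have hΦx : Φ *ᵥ (DR⁻¹ *ᵥ x) = DL *ᵥ (Ψ *ᵥ x) := by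
        rw [hΦ, ← Matrix.mulVec_mulVec, ← Matrix.mulVec_mulVec, hDRx]
      rw [hΦx]
      have h2 : Ψ *ᵥ x = DL⁻¹ *ᵥ (DL *ᵥ (Ψ *ᵥ x)) := by
        rw [Matrix.mulVec_mulVec, Matrix.nonsing_inv_mul DL hDL, Matrix.one_mulVec]
      calc (Ψ *ᵥ x) ⬝ᵥ (Ψ *ᵥ x)
          = (DL⁻¹ *ᵥ (DL *ᵥ (Ψ *ᵥ x))) ⬝ᵥ (DL⁻¹ *ᵥ (DL *ᵥ (Ψ *ᵥ x))) := by rw [← h2]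
        _ ≤ cc * ((DL *ᵥ (Ψ *ᵥ x)) ⬝ᵥ (DL *ᵥ (Ψ *ᵥ x))) := hLinv _
    have hlb : (1 - γ) * (1 - γ) * a ≤ b := by
      have h5 : (1 - γ) * cc = 1 := mul_inv_cancel₀ (ne_of_gt h1γ)
      have h6 : (1 - γ) * (1 - γ) * (cc * cc * b) = b := by
        have : (1 - γ) * (1 - γ) * (cc * cc * b) = ((1 - γ) * cc) * ((1 - γ) * cc) * b := by
          ring
        rw [this, h5]; ring
      calc (1 - γ) * (1 - γ) * a ≤ (1 - γ) * (1 - γ) * (cc * cc * b) :=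
            mul_le_mul_of_nonneg_left lower (mul_nonneg h1γ.le h1γ.le)
        _ = b := h6
    have hlow : (1 - γ) * Real.sqrt a ≤ Real.sqrt b := by
      have h1 : ((1 - γ) * Real.sqrt a)^2 ≤ b := by
        rw [mul_pow, Real.sq_sqrt ha]
        have : (1 - γ)^2 * a = (1 - γ) * (1 - γ) * a := by ring
        linarith [hlb]
      calc (1 - γ) * Real.sqrt a
          = Real.sqrt (((1 - γ) * Real.sqrt a)^2) :=
            (Real.sqrt_sq (mul_nonneg (by linarith) (Real.sqrt_nonneg _))).symm
        _ ≤ Real.sqrt b := Real.sqrt_le_sqrt h1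
    constructor
    · linarith [hup]
    · linarith [hlow]
  · push_neg at hγ1
    constructor
    · linarith [hup]
    · have h1 : Real.sqrt a ≤ γ * Real.sqrt a :=
        le_mul_of_one_le_left (Real.sqrt_nonneg _) hγ1
      linarith [Real.sqrt_nonneg b]
end

section
/- Let A ∈ ℝ^{m×n} and S ∈ ℝ^{r×m} with rank(SA) = rank(A) = p, and suppose (1−ε) I_p ⪯ U_A^T S^T S U_A ⪯ (1+ε) I_p for 0 < ε < 1. Then (1/(1+ε)) U_{SA} U_{SA}^T ⪯ ((SA)^+)^T A^T A (SA)^+ ⪯ (1/(1−ε)) U_{SA} U_{SA}^T. -/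
open Matrix

private lemma psd_smul {k : ℕ} {M : Matrix (Fin k) (Fin k) ℝ} (hM : M.PosSemidef)
    {c : ℝ} (hc : 0 ≤ c) : (c • M).PosSemidef := by
  refine ⟨?_, fun x => ?_⟩
  · have h1 := hM.1
    unfold Matrix.IsHermitian at h1 ⊢
    rw [conjTranspose_smul, h1]
    simp
  · have := hM.2 x
    have h : (x.sum fun i xi => x.sum fun j xj => star xi * (c • M) i j * xj)
        = c * (x.sum fun i xi => x.sum fun j xj => star xi * M i j * xj) := by
      simp only [Finsupp.sum, Finset.mul_sum, Matrix.smul_apply, smul_eq_mul]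
      exact Finset.sum_congr rfl fun _ _ => Finset.sum_congr rfl fun _ _ => by ring
    rw [h]
    exact mul_nonneg hc this

private lemma fix_of_range_le {k l q : ℕ} (Q : Matrix (Fin k) (Fin k) ℝ)
    (C : Matrix (Fin k) (Fin l) ℝ) (B : Matrix (Fin k) (Fin q) ℝ)
    (hQC : Q * C = C)
    (hle : LinearMap.range B.mulVecLin ≤ LinearMap.range C.mulVecLin) :
    Q * B = B := by
  ext i j
  obtain ⟨c, hc⟩ := hle ⟨Pi.single j 1, rfl⟩
  have hc' : C *ᵥ c = B *ᵥ Pi.single j 1 := hc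
  have key : (Q * B) *ᵥ Pi.single j 1 = B *ᵥ Pi.single j 1 := by
    rw [← mulVec_mulVec, ← hc', mulVec_mulVec, hQC]
  have := congrFun key i
  simpa using this

theorem stmt13 {m n r p : ℕ}
    (A : Matrix (Fin m) (Fin n) ℝ) (S : Matrix (Fin r) (Fin m) ℝ)
    (hrSA : (S * A).rank = p) (hrA : A.rank = p)
    (UA : Matrix (Fin m) (Fin p) ℝ)
    (hUA : UAᵀ * UA = 1)
    (hrUA : LinearMap.range UA.mulVecLin = LinearMap.range A.mulVecLin)
    (USA : Matrix (Fin r) (Fin p) ℝ)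
    (hUSA : USAᵀ * USA = 1)
    (hrUSA : LinearMap.range USA.mulVecLin = LinearMap.range (S * A).mulVecLin)
    -- P is the Moore–Penrose pseudoinverse of S * A
    (P : Matrix (Fin n) (Fin r) ℝ)
    (hP1 : S * A * P * (S * A) = S * A) (hP2 : P * (S * A) * P = P)
    (hP3 : (S * A * P).IsSymm) (hP4 : (P * (S * A)).IsSymm)
    (ε : ℝ) (hε0 : 0 < ε) (hε1 : ε < 1)
    (hlo : (UAᵀ * Sᵀ * S * UA - (1 - ε) • 1).PosSemidef)
    (hhi : ((1 + ε) • 1 - UAᵀ * Sᵀ * S * UA).PosSemidef) :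
    (Pᵀ * Aᵀ * A * P - (1 / (1 + ε)) • (USA * USAᵀ)).PosSemidef ∧
      ((1 / (1 - ε)) • (USA * USAᵀ) - Pᵀ * Aᵀ * A * P).PosSemidef := by
  have hε1' : (0:ℝ) < 1 + ε := by linarith
  have hε2' : (0:ℝ) < 1 - ε := by linarith
  set M : Matrix (Fin p) (Fin n) ℝ := UAᵀ * A with hM
  set G : Matrix (Fin p) (Fin p) ℝ := UAᵀ * Sᵀ * S * UA with hG
  -- UA * M = A
  have h1 : UA * M = A := by
    rw [hM, ← Matrix.mul_assoc]
    exact fix_of_range_le (UA * UAᵀ) UA A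
      (by rw [Matrix.mul_assoc, hUA, Matrix.mul_one]) (le_of_eq hrUA.symm)
  -- S*A*P*USA = USA
  have h2 : S * A * P * USA = USA :=
    fix_of_range_le (S * A * P) (S * A) USA hP1 (le_of_eq hrUSA)
  -- USA*USAᵀ * (S*A) = S*A
  have h3 : USA * USAᵀ * (S * A) = S * A :=
    fix_of_range_le (USA * USAᵀ) USA (S * A)
      (by rw [Matrix.mul_assoc, hUSA, Matrix.mul_one]) (le_of_eq hrUSA.symm)
  -- S*A*P = USA*USAᵀ
  have hQs : (S * A * P)ᵀ = S * A * P := hP3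
  have hRs : (USA * USAᵀ)ᵀ = USA * USAᵀ := by
    rw [Matrix.transpose_mul, Matrix.transpose_transpose]
  have hRQ : USA * USAᵀ * (S * A * P) = S * A * P := by
    rw [← Matrix.mul_assoc, h3]
  have h4 : S * A * P = USA * USAᵀ := by
    calc S * A * P = (S * A * P)ᵀ := hQs.symm
      _ = (USA * USAᵀ * (S * A * P))ᵀ := by rw [hRQ]
      _ = (S * A * P)ᵀ * (USA * USAᵀ)ᵀ := Matrix.transpose_mul _ _
      _ = S * A * P * (USA * USAᵀ) := by rw [hQs, hRs]
      _ = USA * USAᵀ := by rw [← Matrix.mul_assoc, h2]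
  -- Aᵀ * A = Mᵀ * M
  have hAA : Pᵀ * Aᵀ * A * P = (M * P)ᵀ * (M * P) := by
    conv_lhs => rw [← h1]
    simp only [Matrix.transpose_mul, Matrix.mul_assoc]
    rw [← Matrix.mul_assoc UAᵀ UA, hUA, Matrix.one_mul]
  -- USA*USAᵀ = (M*P)ᵀ * G * (M*P)
  have hR2 : USA * USAᵀ = (M * P)ᵀ * G * (M * P) := by
    have hRR : USA * USAᵀ = (S * A * P)ᵀ * (S * A * P) := by
      rw [hQs, h4, Matrix.mul_assoc, ← Matrix.mul_assoc USAᵀ, hUSA, Matrix.one_mul]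
    rw [hRR]
    conv_lhs => rw [← h1]
    simp only [hG, Matrix.transpose_mul, Matrix.transpose_transpose, Matrix.mul_assoc]
  constructor
  · have hCpsd : ((1 : Matrix (Fin p) (Fin p) ℝ) - (1 / (1 + ε)) • G).PosSemidef := by
      have := psd_smul hhi (le_of_lt (by positivity : (0:ℝ) < 1 / (1 + ε)))
      have heq : (1 / (1 + ε)) • ((1 + ε) • (1 : Matrix (Fin p) (Fin p) ℝ) - G)
          = 1 - (1 / (1 + ε)) • G := by
        rw [smul_sub, smul_smul]
        congr 1
        rw [one_div, inv_mul_cancel₀ (ne_of_gt hε1'), one_smul]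
      rwa [heq] at this
    have key : Pᵀ * Aᵀ * A * P - (1 / (1 + ε)) • (USA * USAᵀ)
        = (M * P)ᵀ * (1 - (1 / (1 + ε)) • G) * (M * P) := by
      rw [hAA, hR2, Matrix.mul_sub, Matrix.sub_mul, Matrix.mul_one,
        Matrix.mul_smul, Matrix.smul_mul]
    rw [key]
    have := hCpsd.conjTranspose_mul_mul_same (M * P)
    simpa using this
  · have hCpsd : ((1 / (1 - ε)) • G - (1 : Matrix (Fin p) (Fin p) ℝ)).PosSemidef := by
      have := psd_smul hlo (le_of_lt (by positivity : (0:ℝ) < 1 / (1 - ε)))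
      have heq : (1 / (1 - ε)) • (G - (1 - ε) • (1 : Matrix (Fin p) (Fin p) ℝ))
          = (1 / (1 - ε)) • G - 1 := by
        rw [smul_sub, smul_smul]
        congr 1
        rw [one_div, inv_mul_cancel₀ (ne_of_gt hε2'), one_smul]
      rwa [heq] at this
    have key : (1 / (1 - ε)) • (USA * USAᵀ) - Pᵀ * Aᵀ * A * P
        = (M * P)ᵀ * ((1 / (1 - ε)) • G - 1) * (M * P) := by
      rw [hAA, hR2, Matrix.mul_sub, Matrix.sub_mul, Matrix.mul_one,
        Matrix.mul_smul, Matrix.smul_mul]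
    rw [key]
    have := hCpsd.conjTranspose_mul_mul_same (M * P)
    simpa using this
end

section
/- Let w_i, w_j ∈ ℝ^n be vectors with Âw_i ⊥ Âw_j and ‖Âw_i‖ = ‖Âw_j‖ = 1 for a matrix Â = SA, where S satisfies the sketching guarantee |w^T A^T A w' − w^T Â^T Â w'| ≤ (ε/3)‖Aw‖‖Aw'‖ for all w, w' ∈ ℝ^n, with 0 < ε < 1/2. Then |⟨Aw_i, Aw_j⟩| ≤ ε/(3−ε) and 1/(1+ε/3) ≤ ‖Aw_i‖² ≤ 1/(1−ε/3). -/
open Matrix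

theorem stmt15 {m n r : ℕ}
    (A : Matrix (Fin m) (Fin n) ℝ) (S : Matrix (Fin r) (Fin m) ℝ)
    (ε : ℝ) (hε0 : 0 < ε) (hε1 : ε < 1 / 2)
    (hsk : ∀ w w' : Fin n → ℝ,
      |A.mulVec w ⬝ᵥ A.mulVec w' - (S * A).mulVec w ⬝ᵥ (S * A).mulVec w'| ≤
        ε / 3 * Real.sqrt (A.mulVec w ⬝ᵥ A.mulVec w)
          * Real.sqrt (A.mulVec w' ⬝ᵥ A.mulVec w'))
    (wi wj : Fin n → ℝ)
    (hperp : (S * A).mulVec wi ⬝ᵥ (S * A).mulVec wj = 0)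
    (hni : (S * A).mulVec wi ⬝ᵥ (S * A).mulVec wi = 1)
    (hnj : (S * A).mulVec wj ⬝ᵥ (S * A).mulVec wj = 1) :
    |A.mulVec wi ⬝ᵥ A.mulVec wj| ≤ ε / (3 - ε) ∧
      1 / (1 + ε / 3) ≤ A.mulVec wi ⬝ᵥ A.mulVec wi ∧
      A.mulVec wi ⬝ᵥ A.mulVec wi ≤ 1 / (1 - ε / 3) := by
  set a := A.mulVec wi ⬝ᵥ A.mulVec wi with ha
  set b := A.mulVec wj ⬝ᵥ A.mulVec wj with hb
  set c := A.mulVec wi ⬝ᵥ A.mulVec wj with hc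
  have ha0 : 0 ≤ a := Finset.sum_nonneg fun i _ => mul_self_nonneg _
  have hb0 : 0 ≤ b := Finset.sum_nonneg fun i _ => mul_self_nonneg _
  have hεs : (0:ℝ) < 1 - ε / 3 := by linarith
  have h1 := hsk wi wi
  rw [hni, ← ha, mul_assoc, Real.mul_self_sqrt ha0] at h1
  have h2 := hsk wj wj
  rw [hnj, ← hb, mul_assoc, Real.mul_self_sqrt hb0] at h2
  have h3 := hsk wi wj
  rw [hperp, sub_zero, ← ha, ← hb, ← hc] at h3
  have haub : a ≤ 1 / (1 - ε / 3) := by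
    rw [abs_le] at h1
    rw [le_div_iff₀ hεs]; nlinarith [h1.2]
  have halb : 1 / (1 + ε / 3) ≤ a := by
    rw [abs_le] at h1
    rw [div_le_iff₀ (by linarith : (0:ℝ) < 1 + ε / 3)]; nlinarith [h1.1]
  have hbub : b ≤ 1 / (1 - ε / 3) := by
    rw [abs_le] at h2
    rw [le_div_iff₀ hεs]; nlinarith [h2.2]
  refine ⟨?_, halb, haub⟩
  have hsab : Real.sqrt a * Real.sqrt b ≤ 1 / (1 - ε / 3) := by
    calc Real.sqrt a * Real.sqrt b
        ≤ Real.sqrt (1 / (1 - ε / 3)) * Real.sqrt (1 / (1 - ε / 3)) :=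
          mul_le_mul (Real.sqrt_le_sqrt haub) (Real.sqrt_le_sqrt hbub)
            (Real.sqrt_nonneg _) (Real.sqrt_nonneg _)
      _ = 1 / (1 - ε / 3) := Real.mul_self_sqrt (by positivity)
  have : ε / 3 * Real.sqrt a * Real.sqrt b ≤ ε / 3 * (1 / (1 - ε / 3)) := by
    rw [mul_assoc]
    exact mul_le_mul_of_nonneg_left hsab (by positivity)
  have heq : ε / 3 * (1 / (1 - ε / 3)) = ε / (3 - ε) := by
    field_simp
  linarith [h3]
end
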